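/- Let R be an ordered vector space over an ordered division ring D, let A ⊆ R^n be a linear cell, and let p : R^n → R be a linear (affine) function with p ≥ 0 on A and p not identically 0 on A. Then p > 0 on A. -/

import Mathlib

/-- An affine (linear) function `R^n → R` with coefficients in the division ring `D`:
`f(x) = λ₁ x₁ + ⋯ + λₙ xₙ + a`. -/
def IsAffine (D : Type*) {R : Type*} [DivisionRing D] [AddCommGroup R] [Module D R]
    {n : ℕ} (f : (Fin n → R) → R) : Prop :=
  ∃ (l : Fin n → D) (a : R), ∀ x, f x = (∑ i, l i • x i) + a

/-- Linear cells in `R^n`, defined inductively: singletons and open intervals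
(possibly unbounded) in `R`; graphs of affine functions and open cylinders between
affine functions (or `±∞`) over linear cells. -/
inductive IsLinearCell (D R : Type*) [DivisionRing D] [LinearOrder R]
    [AddCommGroup R] [Module D R] : ∀ n : ℕ, Set (Fin n → R) → Prop
  | singleton (a : R) : IsLinearCell D R 1 {x | x 0 = a}
  | ioo (a b : R) : IsLinearCell D R 1 {x | a < x 0 ∧ x 0 < b}
  | ioi (a : R) : IsLinearCell D R 1 {x | a < x 0}
  | iio (b : R) : IsLinearCell D R 1 {x | x 0 < b}
  | univ1 : IsLinearCell D R 1 Set.univ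
  | graph {n : ℕ} {X : Set (Fin n → R)} {f : (Fin n → R) → R} :
      IsLinearCell D R n X → IsAffine D f →
      IsLinearCell D R (n + 1)
        {x | Fin.init x ∈ X ∧ x (Fin.last n) = f (Fin.init x)}
  | cyl {n : ℕ} {X : Set (Fin n → R)} {f g : (Fin n → R) → R} :
      IsLinearCell D R n X → IsAffine D f → IsAffine D g → (∀ x ∈ X, f x < g x) →
      IsLinearCell D R (n + 1)
        {x | Fin.init x ∈ X ∧ f (Fin.init x) < x (Fin.last n) ∧
          x (Fin.last n) < g (Fin.init x)}
  | cylTop {n : ℕ} {X : Set (Fin n → R)} {f : (Fin n → R) → R} :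
      IsLinearCell D R n X → IsAffine D f →
      IsLinearCell D R (n + 1) {x | Fin.init x ∈ X ∧ f (Fin.init x) < x (Fin.last n)}
  | cylBot {n : ℕ} {X : Set (Fin n → R)} {g : (Fin n → R) → R} :
      IsLinearCell D R n X → IsAffine D g →
      IsLinearCell D R (n + 1) {x | Fin.init x ∈ X ∧ x (Fin.last n) < g (Fin.init x)}
  | cylAll {n : ℕ} {X : Set (Fin n → R)} :
      IsLinearCell D R n X → IsLinearCell D R (n + 1) {x | Fin.init x ∈ X}


section Aux
variable {D R : Type*} [DivisionRing D] [AddCommGroup R] [LinearOrder R] [IsOrderedAddMonoid R] [Module D R]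

lemma my_l_eq_zero {l : D} {s : R} (hs : s ≠ 0) (h : l • s = 0) : l = 0 := by
  by_contra hl
  apply hs
  calc s = (l⁻¹ * l) • s := by rw [inv_mul_cancel₀ hl, one_smul]
    _ = l⁻¹ • (l • s) := mul_smul _ _ _
    _ = 0 := by rw [h, smul_zero]

lemma my_half_add_half (h2 : (2:D) ≠ 0) (r : R) : (2:D)⁻¹ • r + (2:D)⁻¹ • r = r := by
  rw [← add_smul]
  have : (2:D)⁻¹ + (2:D)⁻¹ = 1 := by
    have h := inv_mul_cancel₀ h2
    calc (2:D)⁻¹ + (2:D)⁻¹ = (2:D)⁻¹ * (1+1) := by rw [mul_add, mul_one]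
      _ = (2:D)⁻¹ * 2 := by norm_num
      _ = 1 := h
  rw [this, one_smul]

lemma my_half_pos (h2 : (2:D) ≠ 0) {r : R} (hr : 0 < r) : 0 < (2:D)⁻¹ • r := by
  by_contra h
  push_neg at h
  have := add_nonpos h h
  rw [my_half_add_half h2 r] at this
  exact absurd this (not_le.2 hr)

lemma my_half_lt (h2 : (2:D) ≠ 0) {r : R} (hr : 0 < r) : (2:D)⁻¹ • r < r := by
  have hp := my_half_pos h2 hr
  calc (2:D)⁻¹ • r = (2:D)⁻¹ • r + 0 := (add_zero _).symm
    _ < (2:D)⁻¹ • r + (2:D)⁻¹ • r := by exact add_lt_add_right hp _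
    _ = r := my_half_add_half h2 r

lemma my_onedim (l0 : D) (t₀ c s : R) (hs : s ≠ 0) (h0 : l0 • t₀ + c = 0)
    (hp : 0 ≤ l0 • (t₀ + s) + c) (hm : 0 ≤ l0 • (t₀ - s) + c) : l0 = 0 ∧ c = 0 := by
  have e1 : l0 • (t₀ + s) + c = l0 • s := by
    calc l0 • (t₀ + s) + c = (l0 • t₀ + c) + l0 • s := by rw [smul_add]; abel
      _ = l0 • s := by rw [h0, zero_add]
  have e2 : l0 • (t₀ - s) + c = -(l0 • s) := by
    calc l0 • (t₀ - s) + c = (l0 • t₀ + c) - l0 • s := by rw [smul_sub]; abel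
      _ = -(l0 • s) := by rw [h0, zero_sub]
  rw [e1] at hp
  rw [e2] at hm
  have hls : l0 • s = 0 := le_antisymm (by simpa using neg_nonneg.mp (by simpa using hm)) hp
  have hl := my_l_eq_zero hs hls
  refine ⟨hl, ?_⟩
  rw [hl, zero_smul, zero_add] at h0
  exact h0

lemma my_affine_decomp {n : ℕ} {p : (Fin (n+1) → R) → R} (hp : IsAffine D p) :
    ∃ (q : (Fin n → R) → R) (l : D), IsAffine D q ∧
      ∀ x : Fin (n+1) → R, p x = q (Fin.init x) + l • x (Fin.last n) := by
  obtain ⟨lam, a, h⟩ := hp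
  refine ⟨fun z => (∑ i, lam i.castSucc • z i) + a, lam (Fin.last n),
    ⟨fun i => lam i.castSucc, a, fun z => rfl⟩, fun x => ?_⟩
  rw [h, Fin.sum_univ_castSucc]
  simp only [Fin.init]
  abel

lemma my_affine_comb {n : ℕ} {q f : (Fin n → R) → R} (hq : IsAffine D q)
    (hf : IsAffine D f) (l : D) : IsAffine D (fun z => q z + l • f z) := by
  obtain ⟨lq, aq, hq⟩ := hq
  obtain ⟨lf, af, hf⟩ := hf
  refine ⟨fun i => lq i + l * lf i, aq + l • af, fun z => ?_⟩
  simp only [hq, hf, smul_add, Finset.smul_sum, add_smul, mul_smul, Finset.sum_add_distrib]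
  abel

end Aux

section Key
variable {D R : Type*} [DivisionRing D] [AddCommGroup R] [LinearOrder R] [IsOrderedAddMonoid R] [Module D R]

lemma my_key (e : R) (he : 0 < e) (htwo : (2:D) ≠ 0)
    {n : ℕ} {A : Set (Fin n → R)} (hA : IsLinearCell D R n A) :
    ∀ p : (Fin n → R) → R, IsAffine D p → (∀ x ∈ A, 0 ≤ p x) →
      ∀ x₀ ∈ A, p x₀ = 0 → ∀ y ∈ A, p y = 0 := by
  induction hA with
  | singleton a =>
    intro p hp hnn x₀ hx₀ h0 y hy
    obtain ⟨l, c, hp⟩ := hp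
    simp only [Set.mem_setOf_eq] at hx₀ hy
    rw [hp, Fin.sum_univ_one, hy, ← hx₀, ← Fin.sum_univ_one (f := fun i => l i • x₀ i), ← hp]
    exact h0
  | ioo a b =>
    intro p hp hnn x₀ hx₀ h0 y hy
    obtain ⟨l, c, hp⟩ := hp
    simp only [Set.mem_setOf_eq] at hx₀ hy
    rw [hp, Fin.sum_univ_one] at h0
    have hγ : 0 < min (x₀ 0 - a) (b - x₀ 0) := lt_min (sub_pos.2 hx₀.1) (sub_pos.2 hx₀.2)
    set s : R := (2:D)⁻¹ • min (x₀ 0 - a) (b - x₀ 0) with hsdef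
    have hs : 0 < s := my_half_pos htwo hγ
    have hslt : s < min (x₀ 0 - a) (b - x₀ 0) := my_half_lt htwo hγ
    have memp : (fun _ : Fin 1 => x₀ 0 + s) ∈ {x : Fin 1 → R | a < x 0 ∧ x 0 < b} := by
      constructor
      · exact lt_trans hx₀.1 (lt_add_of_pos_right _ hs)
      · have h' : s < b - x₀ 0 := lt_of_lt_of_le hslt (min_le_right _ _)
        exact lt_sub_iff_add_lt'.mp h'
    have memm : (fun _ : Fin 1 => x₀ 0 - s) ∈ {x : Fin 1 → R | a < x 0 ∧ x 0 < b} := by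
      constructor
      · have h' : s < x₀ 0 - a := lt_of_lt_of_le hslt (min_le_left _ _)
        exact lt_sub_comm.mp h'
      · exact lt_trans (sub_lt_self _ hs) hx₀.2
    have hpp := hnn _ memp
    have hpm := hnn _ memm
    rw [hp, Fin.sum_univ_one] at hpp hpm
    obtain ⟨hl, hc⟩ := my_onedim (l 0) (x₀ 0) c s hs.ne' h0 hpp hpm
    rw [hp, Fin.sum_univ_one, hl, zero_smul, zero_add, hc]
  | ioi a =>
    intro p hp hnn x₀ hx₀ h0 y hy
    obtain ⟨l, c, hp⟩ := hp
    simp only [Set.mem_setOf_eq] at hx₀ hy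
    rw [hp, Fin.sum_univ_one] at h0
    have hγ : 0 < x₀ 0 - a := sub_pos.2 hx₀
    set s : R := (2:D)⁻¹ • (x₀ 0 - a)
    have hs : 0 < s := my_half_pos htwo hγ
    have hslt : s < x₀ 0 - a := my_half_lt htwo hγ
    have memp : (fun _ : Fin 1 => x₀ 0 + s) ∈ {x : Fin 1 → R | a < x 0} :=
      lt_trans hx₀ (lt_add_of_pos_right _ hs)
    have memm : (fun _ : Fin 1 => x₀ 0 - s) ∈ {x : Fin 1 → R | a < x 0} := by
      exact lt_sub_comm.mp hslt
    have hpp := hnn _ memp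
    have hpm := hnn _ memm
    rw [hp, Fin.sum_univ_one] at hpp hpm
    obtain ⟨hl, hc⟩ := my_onedim (l 0) (x₀ 0) c s hs.ne' h0 hpp hpm
    rw [hp, Fin.sum_univ_one, hl, zero_smul, zero_add, hc]
  | iio b =>
    intro p hp hnn x₀ hx₀ h0 y hy
    obtain ⟨l, c, hp⟩ := hp
    simp only [Set.mem_setOf_eq] at hx₀ hy
    rw [hp, Fin.sum_univ_one] at h0
    have hγ : 0 < b - x₀ 0 := sub_pos.2 hx₀
    set s : R := (2:D)⁻¹ • (b - x₀ 0)
    have hs : 0 < s := my_half_pos htwo hγ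
    have hslt : s < b - x₀ 0 := my_half_lt htwo hγ
    have memp : (fun _ : Fin 1 => x₀ 0 + s) ∈ {x : Fin 1 → R | x 0 < b} := by
      exact lt_sub_iff_add_lt'.mp hslt
    have memm : (fun _ : Fin 1 => x₀ 0 - s) ∈ {x : Fin 1 → R | x 0 < b} :=
      lt_trans (sub_lt_self _ hs) hx₀
    have hpp := hnn _ memp
    have hpm := hnn _ memm
    rw [hp, Fin.sum_univ_one] at hpp hpm
    obtain ⟨hl, hc⟩ := my_onedim (l 0) (x₀ 0) c s hs.ne' h0 hpp hpm
    rw [hp, Fin.sum_univ_one, hl, zero_smul, zero_add, hc]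
  | univ1 =>
    intro p hp hnn x₀ hx₀ h0 y hy
    obtain ⟨l, c, hp⟩ := hp
    rw [hp, Fin.sum_univ_one] at h0
    have hpp := hnn (fun _ : Fin 1 => x₀ 0 + e) (Set.mem_univ _)
    have hpm := hnn (fun _ : Fin 1 => x₀ 0 - e) (Set.mem_univ _)
    rw [hp, Fin.sum_univ_one] at hpp hpm
    obtain ⟨hl, hc⟩ := my_onedim (l 0) (x₀ 0) c e he.ne' h0 hpp hpm
    rw [hp, Fin.sum_univ_one, hl, zero_smul, zero_add, hc]
  | graph hX hf ihX =>
    rename_i n X f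
    intro p hp hnn x₀ hx₀ h0 y hy
    obtain ⟨q, l, hq, hdec⟩ := my_affine_decomp hp
    simp only [Set.mem_setOf_eq] at hx₀ hy
    have hr : IsAffine D (fun z => q z + l • f z) := my_affine_comb hq hf l
    have hrnn : ∀ z ∈ X, 0 ≤ q z + l • f z := by
      intro z hz
      have hmem : Fin.snoc z (f z) ∈ {x : Fin (n+1) → R |
          Fin.init x ∈ X ∧ x (Fin.last n) = f (Fin.init x)} := by
        simp only [Set.mem_setOf_eq, Fin.init_snoc, Fin.snoc_last]
        exact ⟨hz, trivial⟩
      have := hnn _ hmem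
      rwa [hdec, Fin.init_snoc, Fin.snoc_last] at this
    have hr0 : q (Fin.init x₀) + l • f (Fin.init x₀) = 0 := by
      rw [← hx₀.2, ← hdec]; exact h0
    have hall := ihX _ hr hrnn _ hx₀.1 hr0 _ hy.1
    rw [hdec, hy.2]
    exact hall
  | cyl hX hf hg hfg ihX =>
    rename_i n X f g
    intro p hp hnn x₀ hx₀ h0 y hy
    obtain ⟨q, l, hq, hdec⟩ := my_affine_decomp hp
    simp only [Set.mem_setOf_eq] at hx₀ hy
    obtain ⟨hz₀, hf₀, hg₀⟩ := hx₀
    rw [hdec] at h0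
    set z₀ := Fin.init x₀
    set t₀ := x₀ (Fin.last n) with ht₀
    have hγ : 0 < min (t₀ - f z₀) (g z₀ - t₀) := lt_min (sub_pos.2 hf₀) (sub_pos.2 hg₀)
    set s : R := (2:D)⁻¹ • min (t₀ - f z₀) (g z₀ - t₀)
    have hs : 0 < s := my_half_pos htwo hγ
    have hslt : s < min (t₀ - f z₀) (g z₀ - t₀) := my_half_lt htwo hγ
    have memp : Fin.snoc z₀ (t₀ + s) ∈ {x : Fin (n+1) → R | Fin.init x ∈ X ∧
        f (Fin.init x) < x (Fin.last n) ∧ x (Fin.last n) < g (Fin.init x)} := by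
      simp only [Set.mem_setOf_eq, Fin.init_snoc, Fin.snoc_last]
      refine ⟨hz₀, lt_trans hf₀ (lt_add_of_pos_right _ hs), ?_⟩
      exact lt_sub_iff_add_lt'.mp (lt_of_lt_of_le hslt (min_le_right _ _))
    have memm : Fin.snoc z₀ (t₀ - s) ∈ {x : Fin (n+1) → R | Fin.init x ∈ X ∧
        f (Fin.init x) < x (Fin.last n) ∧ x (Fin.last n) < g (Fin.init x)} := by
      simp only [Set.mem_setOf_eq, Fin.init_snoc, Fin.snoc_last]
      refine ⟨hz₀, ?_, lt_trans (sub_lt_self _ hs) hg₀⟩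
      exact lt_sub_comm.mp (lt_of_lt_of_le hslt (min_le_left _ _))
    have hpp := hnn _ memp
    have hpm := hnn _ memm
    rw [hdec, Fin.init_snoc, Fin.snoc_last] at hpp hpm
    obtain ⟨hl, hc⟩ := my_onedim l t₀ (q z₀) s hs.ne' (by rw [add_comm]; exact h0)
      (by rw [add_comm]; exact hpp) (by rw [add_comm]; exact hpm)
    have hqnn : ∀ z ∈ X, 0 ≤ q z := by
      intro z hz
      have hlt := hfg z hz
      set m : R := (2:D)⁻¹ • (f z + g z) with hm
      have hmm : m + m = f z + g z := my_half_add_half htwo _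
      have h1 : f z < m := by
        by_contra h
        push_neg at h
        have h3 : m + m ≤ f z + f z := add_le_add h h
        rw [hmm] at h3
        exact absurd (le_of_add_le_add_left h3) (not_le.2 hlt)
      have h2 : m < g z := by
        by_contra h
        push_neg at h
        have h3 : g z + g z ≤ m + m := add_le_add h h
        rw [hmm] at h3
        exact absurd (le_of_add_le_add_right h3) (not_le.2 hlt)
      have hmem : Fin.snoc z m ∈ {x : Fin (n+1) → R | Fin.init x ∈ X ∧
          f (Fin.init x) < x (Fin.last n) ∧ x (Fin.last n) < g (Fin.init x)} := by
        simp only [Set.mem_setOf_eq, Fin.init_snoc, Fin.snoc_last]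
        exact ⟨hz, h1, h2⟩
      have := hnn _ hmem
      rwa [hdec, Fin.init_snoc, Fin.snoc_last, hl, zero_smul, add_zero] at this
    have hq0 := ihX q hq hqnn z₀ hz₀ hc
    rw [hdec, hl, zero_smul, add_zero]
    exact hq0 _ hy.1
  | cylTop hX hf ihX =>
    rename_i n X f
    intro p hp hnn x₀ hx₀ h0 y hy
    obtain ⟨q, l, hq, hdec⟩ := my_affine_decomp hp
    simp only [Set.mem_setOf_eq] at hx₀ hy
    obtain ⟨hz₀, hf₀⟩ := hx₀
    rw [hdec] at h0
    set z₀ := Fin.init x₀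
    set t₀ := x₀ (Fin.last n) with ht₀
    have hγ : 0 < t₀ - f z₀ := sub_pos.2 hf₀
    set s : R := (2:D)⁻¹ • (t₀ - f z₀)
    have hs : 0 < s := my_half_pos htwo hγ
    have hslt : s < t₀ - f z₀ := my_half_lt htwo hγ
    have memp : Fin.snoc z₀ (t₀ + s) ∈ {x : Fin (n+1) → R | Fin.init x ∈ X ∧
        f (Fin.init x) < x (Fin.last n)} := by
      simp only [Set.mem_setOf_eq, Fin.init_snoc, Fin.snoc_last]
      exact ⟨hz₀, lt_trans hf₀ (lt_add_of_pos_right _ hs)⟩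
    have memm : Fin.snoc z₀ (t₀ - s) ∈ {x : Fin (n+1) → R | Fin.init x ∈ X ∧
        f (Fin.init x) < x (Fin.last n)} := by
      simp only [Set.mem_setOf_eq, Fin.init_snoc, Fin.snoc_last]
      exact ⟨hz₀, lt_sub_comm.mp hslt⟩
    have hpp := hnn _ memp
    have hpm := hnn _ memm
    rw [hdec, Fin.init_snoc, Fin.snoc_last] at hpp hpm
    obtain ⟨hl, hc⟩ := my_onedim l t₀ (q z₀) s hs.ne' (by rw [add_comm]; exact h0)
      (by rw [add_comm]; exact hpp) (by rw [add_comm]; exact hpm)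
    have hqnn : ∀ z ∈ X, 0 ≤ q z := by
      intro z hz
      have hmem : Fin.snoc z (f z + e) ∈ {x : Fin (n+1) → R | Fin.init x ∈ X ∧
          f (Fin.init x) < x (Fin.last n)} := by
        simp only [Set.mem_setOf_eq, Fin.init_snoc, Fin.snoc_last]
        exact ⟨hz, lt_add_of_pos_right _ he⟩
      have := hnn _ hmem
      rwa [hdec, Fin.init_snoc, Fin.snoc_last, hl, zero_smul, add_zero] at this
    have hq0 := ihX q hq hqnn z₀ hz₀ hc
    rw [hdec, hl, zero_smul, add_zero]
    exact hq0 _ hy.1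
  | cylBot hX hg ihX =>
    rename_i n X g
    intro p hp hnn x₀ hx₀ h0 y hy
    obtain ⟨q, l, hq, hdec⟩ := my_affine_decomp hp
    simp only [Set.mem_setOf_eq] at hx₀ hy
    obtain ⟨hz₀, hg₀⟩ := hx₀
    rw [hdec] at h0
    set z₀ := Fin.init x₀
    set t₀ := x₀ (Fin.last n) with ht₀
    have hγ : 0 < g z₀ - t₀ := sub_pos.2 hg₀
    set s : R := (2:D)⁻¹ • (g z₀ - t₀)
    have hs : 0 < s := my_half_pos htwo hγ
    have hslt : s < g z₀ - t₀ := my_half_lt htwo hγ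
    have memp : Fin.snoc z₀ (t₀ + s) ∈ {x : Fin (n+1) → R | Fin.init x ∈ X ∧
        x (Fin.last n) < g (Fin.init x)} := by
      simp only [Set.mem_setOf_eq, Fin.init_snoc, Fin.snoc_last]
      exact ⟨hz₀, lt_sub_iff_add_lt'.mp hslt⟩
    have memm : Fin.snoc z₀ (t₀ - s) ∈ {x : Fin (n+1) → R | Fin.init x ∈ X ∧
        x (Fin.last n) < g (Fin.init x)} := by
      simp only [Set.mem_setOf_eq, Fin.init_snoc, Fin.snoc_last]
      exact ⟨hz₀, lt_trans (sub_lt_self _ hs) hg₀⟩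
    have hpp := hnn _ memp
    have hpm := hnn _ memm
    rw [hdec, Fin.init_snoc, Fin.snoc_last] at hpp hpm
    obtain ⟨hl, hc⟩ := my_onedim l t₀ (q z₀) s hs.ne' (by rw [add_comm]; exact h0)
      (by rw [add_comm]; exact hpp) (by rw [add_comm]; exact hpm)
    have hqnn : ∀ z ∈ X, 0 ≤ q z := by
      intro z hz
      have hmem : Fin.snoc z (g z - e) ∈ {x : Fin (n+1) → R | Fin.init x ∈ X ∧
          x (Fin.last n) < g (Fin.init x)} := by
        simp only [Set.mem_setOf_eq, Fin.init_snoc, Fin.snoc_last]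
        exact ⟨hz, sub_lt_self _ he⟩
      have := hnn _ hmem
      rwa [hdec, Fin.init_snoc, Fin.snoc_last, hl, zero_smul, add_zero] at this
    have hq0 := ihX q hq hqnn z₀ hz₀ hc
    rw [hdec, hl, zero_smul, add_zero]
    exact hq0 _ hy.1
  | cylAll hX ihX =>
    rename_i n X
    intro p hp hnn x₀ hx₀ h0 y hy
    obtain ⟨q, l, hq, hdec⟩ := my_affine_decomp hp
    simp only [Set.mem_setOf_eq] at hx₀ hy
    rw [hdec] at h0
    set z₀ := Fin.init x₀
    set t₀ := x₀ (Fin.last n) with ht₀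
    have memp : Fin.snoc z₀ (t₀ + e) ∈ {x : Fin (n+1) → R | Fin.init x ∈ X} := by
      simp only [Set.mem_setOf_eq, Fin.init_snoc]; exact hx₀
    have memm : Fin.snoc z₀ (t₀ - e) ∈ {x : Fin (n+1) → R | Fin.init x ∈ X} := by
      simp only [Set.mem_setOf_eq, Fin.init_snoc]; exact hx₀
    have hpp := hnn _ memp
    have hpm := hnn _ memm
    rw [hdec, Fin.init_snoc, Fin.snoc_last] at hpp hpm
    obtain ⟨hl, hc⟩ := my_onedim l t₀ (q z₀) e he.ne' (by rw [add_comm]; exact h0)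
      (by rw [add_comm]; exact hpp) (by rw [add_comm]; exact hpm)
    have hqnn : ∀ z ∈ X, 0 ≤ q z := by
      intro z hz
      have hmem : Fin.snoc z (0:R) ∈ {x : Fin (n+1) → R | Fin.init x ∈ X} := by
        simp only [Set.mem_setOf_eq, Fin.init_snoc]; exact hz
      have := hnn _ hmem
      rwa [hdec, Fin.init_snoc, Fin.snoc_last, hl, zero_smul, add_zero] at this
    have hq0 := ihX q hq hqnn z₀ hx₀ hc
    rw [hdec, hl, zero_smul, add_zero]
    exact hq0 _ hy
end Key

/-- an affine function `p` which is nonnegative and not identically zero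
on a linear cell `A` is strictly positive on `A`. -/
theorem stmt_8 {D R : Type*} [DivisionRing D] [LinearOrder D]
    [AddCommGroup R] [LinearOrder R] [IsOrderedAddMonoid R] [Module D R]
    (hpos : ∀ (d : D) (r : R), 0 < d → 0 < r → 0 < d • r)
    {n : ℕ} (A : Set (Fin n → R)) (hA : IsLinearCell D R n A)
    (p : (Fin n → R) → R) (hp : IsAffine D p)
    (hnonneg : ∀ x ∈ A, 0 ≤ p x) (hne : ∃ x ∈ A, p x ≠ 0) :
    ∀ x ∈ A, 0 < p x := by
  obtain ⟨x', hx', hpx'⟩ := hne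
  have he : 0 < p x' := lt_of_le_of_ne (hnonneg x' hx') (Ne.symm hpx')
  have htwo : (2:D) ≠ 0 := by
    intro h2
    have hsum : p x' + p x' = 0 := by
      have h3 : (2:D) • p x' = p x' + p x' := two_smul D (p x')
      rw [← h3, h2, zero_smul]
    have : 0 < p x' + p x' := add_pos he he
    rw [hsum] at this
    exact lt_irrefl 0 this
  intro y hy
  rcases (hnonneg y hy).lt_or_eq with h | h
  · exact h
  · exfalso
    exact hpx' (my_key (p x') he htwo hA p hp hnonneg y hy h.symm x' hx')
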